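/- Let Γ be an additive subgroup of 𝔽^t, b: 𝔽^d × 𝔽^t → 𝔽^k bilinear, (G,ψ) a Γ-gain graph, and ψ' equivalent to ψ via switchings. Then dim_𝔽 span{L_{e,ψ} : e ∈ E} = dim_𝔽 span{L_{e,ψ'} : e ∈ E}, where L_{e,ψ} ⊆ (𝔽^d)^V ⊕ 𝔽^k is defined by x(i)+x(j)=0, b(x(i),ψ(e))+x(∗)=0, x supported on {i,j} and ∗, for non-loop e=(i,j). -/
import Mathlib


/-- A directed multigraph: edges with a source and target map. -/
structure GG (V E : Type*) where
  src : E → V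
  tgt : E → V

namespace GG

variable {V E : Type*}

/-- The initial vertex of a step (an edge together with a direction). -/
def stepHead (G : GG V E) (s : E × Bool) : V := if s.2 then G.src s.1 else G.tgt s.1

/-- The final vertex of a step. -/
def stepLast (G : GG V E) (s : E × Bool) : V := if s.2 then G.tgt s.1 else G.src s.1

/-- Walks from `u` to `w` using only edges of `X`. -/
inductive IsWalkFrom (G : GG V E) (X : Set E) : V → V → List (E × Bool) → Prop
  | nil (v : V) : IsWalkFrom G X v v []
  | cons {u w : V} {s : E × Bool} {l : List (E × Bool)} (he : s.1 ∈ X)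
      (h1 : G.stepHead s = u) (hl : IsWalkFrom G X (G.stepLast s) w l) :
      IsWalkFrom G X u w (s :: l)

variable {A : Type*} [AddCommGroup A]

/-- The (additive) gain of a walk: the sum of the edge gains, negated on backward edges. -/
def addGainOf (ψ : E → A) : List (E × Bool) → A
  | [] => 0
  | s :: l => (if s.2 then ψ s.1 else -ψ s.1) + addGainOf ψ l

/-- `⟨⟨F⟩⟩`: the additive subgroup generated by the gains of all closed walks in `F`. -/
def allWalkAddGroup (G : GG V E) (ψ : E → A) (F : Set E) : AddSubgroup A :=
  AddSubgroup.closure {g : A | ∃ (v : V) (l : List (E × Bool)),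
    G.IsWalkFrom F v v l ∧ addGainOf ψ l = g}

open Classical in
/-- The (additive) switching of `ψ` at vertex `v` with `γ`. -/
noncomputable def switchAdd (G : GG V E) (ψ : E → A) (v : V) (γ : A) : E → A :=
  fun e => (if G.src e = v then γ else 0) + ψ e + (if G.tgt e = v then -γ else 0)

/-- Equivalence of additive gain functions via finite sequences of switchings. -/
def EquivalentAdd (G : GG V E) (ψ ψ' : E → A) : Prop :=
  Relation.ReflTransGen (fun a b => ∃ v γ, b = G.switchAdd a v γ) ψ ψ'

end GG

open GG

variable {𝔽 : Type*} [Field 𝔽] {d t k : ℕ}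

open Classical in
/-- The canonical subspace `L_{e,ψ}` of `(𝔽^d)^V ⊕ 𝔽^k`: for a non-loop `e=(i,j)`,
`{(x,y) : x(i)+x(j)=0, b(x(i),ψ(e))+y=0, x = 0 off {i,j}}`; for a loop,
`{(x,y) : x = 0, y ∈ {−b(α,ψ(e)) : α}}`. -/
noncomputable def Lsub {V E : Type*} (G : GG V E)
    (b : (Fin d → 𝔽) →ₗ[𝔽] (Fin t → 𝔽) →ₗ[𝔽] (Fin k → 𝔽))
    (ψ : E → (Fin t → 𝔽)) (e : E) :
    Submodule 𝔽 ((V → Fin d → 𝔽) × (Fin k → 𝔽)) :=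
  if G.src e = G.tgt e then
    LinearMap.ker (LinearMap.fst 𝔽 (V → Fin d → 𝔽) (Fin k → 𝔽)) ⊓
      Submodule.comap (LinearMap.snd 𝔽 (V → Fin d → 𝔽) (Fin k → 𝔽))
        (LinearMap.range (-(b.flip (ψ e))))
  else
    LinearMap.ker ((LinearMap.proj (R := 𝔽) (φ := fun _ : V => Fin d → 𝔽) (G.src e) +
        LinearMap.proj (G.tgt e)) ∘ₗ LinearMap.fst 𝔽 (V → Fin d → 𝔽) (Fin k → 𝔽)) ⊓
    LinearMap.ker ((b.flip (ψ e)) ∘ₗ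
        (LinearMap.proj (R := 𝔽) (φ := fun _ : V => Fin d → 𝔽) (G.src e)) ∘ₗ
        LinearMap.fst 𝔽 (V → Fin d → 𝔽) (Fin k → 𝔽) +
      LinearMap.snd 𝔽 (V → Fin d → 𝔽) (Fin k → 𝔽)) ⊓
    ⨅ v ∈ {v : V | v ≠ G.src e ∧ v ≠ G.tgt e},
      LinearMap.ker ((LinearMap.proj (R := 𝔽) (φ := fun _ : V => Fin d → 𝔽) v) ∘ₗ
        LinearMap.fst 𝔽 (V → Fin d → 𝔽) (Fin k → 𝔽))

/-- The shear `(x, y) ↦ (x, y - b(x v, γ))`, a linear automorphism. -/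
noncomputable def shear {V : Type*} (b : (Fin d → 𝔽) →ₗ[𝔽] (Fin t → 𝔽) →ₗ[𝔽] (Fin k → 𝔽))
    (v : V) (γ : Fin t → 𝔽) :
    ((V → Fin d → 𝔽) × (Fin k → 𝔽)) ≃ₗ[𝔽] ((V → Fin d → 𝔽) × (Fin k → 𝔽)) :=
  LinearEquiv.ofLinear
    (LinearMap.prod (LinearMap.fst 𝔽 _ _)
      (LinearMap.snd 𝔽 _ _ - (b.flip γ) ∘ₗ
        (LinearMap.proj (R := 𝔽) (φ := fun _ : V => Fin d → 𝔽) v) ∘ₗ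
        LinearMap.fst 𝔽 (V → Fin d → 𝔽) (Fin k → 𝔽)))
    (LinearMap.prod (LinearMap.fst 𝔽 _ _)
      (LinearMap.snd 𝔽 _ _ + (b.flip γ) ∘ₗ
        (LinearMap.proj (R := 𝔽) (φ := fun _ : V => Fin d → 𝔽) v) ∘ₗ
        LinearMap.fst 𝔽 (V → Fin d → 𝔽) (Fin k → 𝔽)))
    (by apply LinearMap.ext; rintro ⟨x, y⟩; simp)
    (by apply LinearMap.ext; rintro ⟨x, y⟩; simp)

lemma shear_symm_apply {V : Type*} (b : (Fin d → 𝔽) →ₗ[𝔽] (Fin t → 𝔽) →ₗ[𝔽] (Fin k → 𝔽))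
    (v : V) (γ : Fin t → 𝔽) (p : (V → Fin d → 𝔽) × (Fin k → 𝔽)) :
    (shear b v γ).symm p = (p.1, p.2 + b (p.1 v) γ) := rfl

open Classical in
lemma key_eq {V E : Type*} (G : GG V E)
    (b : (Fin d → 𝔽) →ₗ[𝔽] (Fin t → 𝔽) →ₗ[𝔽] (Fin k → 𝔽))
    (ψ : E → (Fin t → 𝔽)) (v : V) (γ : Fin t → 𝔽) (e : E)
    (hl : ¬ G.src e = G.tgt e) {x : V → Fin d → 𝔽}
    (hA : x (G.src e) + x (G.tgt e) = 0)
    (hC : ∀ w, ¬ w = G.src e → ¬ w = G.tgt e → x w = 0) :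
    b (x (G.src e)) ((if G.src e = v then γ else 0) + ψ e +
        (if G.tgt e = v then -γ else 0)) = b (x (G.src e)) (ψ e) + b (x v) γ := by
  by_cases h1 : G.src e = v
  · have h2 : ¬ G.tgt e = v := fun h2 => hl (h1.trans h2.symm)
    rw [if_pos h1, if_neg h2, add_zero, map_add, ← h1]
    abel
  · by_cases h2 : G.tgt e = v
    · rw [if_neg h1, if_pos h2, zero_add, map_add, map_neg]
      have hxt : x (G.tgt e) = -x (G.src e) := eq_neg_of_add_eq_zero_right hA
      rw [← h2, hxt, map_neg, LinearMap.neg_apply]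
    · have hv0 : x v = 0 := hC v (fun h => h1 h.symm) (fun h => h2 h.symm)
      rw [if_neg h1, if_neg h2, add_zero, zero_add, hv0, map_zero,
        LinearMap.zero_apply, add_zero]

lemma map_shear_Lsub {V E : Type*} (G : GG V E)
    (b : (Fin d → 𝔽) →ₗ[𝔽] (Fin t → 𝔽) →ₗ[𝔽] (Fin k → 𝔽))
    (ψ : E → (Fin t → 𝔽)) (v : V) (γ : Fin t → 𝔽) (e : E) :
    Submodule.map ((shear b v γ) : _ →ₗ[𝔽] _) (Lsub G b ψ e) =
      Lsub G b (G.switchAdd ψ v γ) e := by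
  classical
  ext ⟨x, y⟩
  rw [Submodule.mem_map_equiv, shear_symm_apply]
  unfold Lsub GG.switchAdd
  by_cases hl : G.src e = G.tgt e
  · -- loop case
    rw [if_pos hl, if_pos hl]
    have hψ : (if G.src e = v then γ else 0) + ψ e +
        (if G.tgt e = v then -γ else 0) = ψ e := by
      rw [← hl]; split_ifs <;> abel
    rw [hψ]
    simp only [Submodule.mem_inf, LinearMap.mem_ker, LinearMap.fst_apply,
      Submodule.mem_comap, LinearMap.snd_apply, LinearMap.mem_range, LinearMap.neg_apply,
      LinearMap.flip_apply]
    constructor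
    · rintro ⟨hx, α, hα⟩
      have hx0 : x v = 0 := by rw [hx]; rfl
      rw [hx0, map_zero, LinearMap.zero_apply, add_zero] at hα
      exact ⟨hx, α, hα⟩
    · rintro ⟨hx, α, hα⟩
      have hx0 : x v = 0 := by rw [hx]; rfl
      rw [hx0, map_zero, LinearMap.zero_apply, add_zero]
      exact ⟨hx, α, hα⟩
  · -- non-loop case
    rw [if_neg hl, if_neg hl]
    simp only [Submodule.mem_inf, LinearMap.mem_ker, LinearMap.comp_apply,
      LinearMap.add_apply, LinearMap.fst_apply, LinearMap.snd_apply, LinearMap.proj_apply,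
      LinearMap.flip_apply, Submodule.mem_iInf, Set.mem_setOf_eq, ne_eq]
    constructor
    · rintro ⟨⟨hA, hB⟩, hC⟩
      refine ⟨⟨hA, ?_⟩, hC⟩
      rw [key_eq G b ψ v γ e hl hA (fun w h1 h2 => hC w ⟨h1, h2⟩), add_assoc,
        add_comm ((b (x v)) γ) y]
      exact hB
    · rintro ⟨⟨hA, hB⟩, hC⟩
      refine ⟨⟨hA, ?_⟩, hC⟩
      rw [key_eq G b ψ v γ e hl hA (fun w h1 h2 => hC w ⟨h1, h2⟩), add_assoc,
        add_comm ((b (x v)) γ) y] at hB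
      exact hB

lemma finrank_switch {V E : Type*} (G : GG V E)
    (b : (Fin d → 𝔽) →ₗ[𝔽] (Fin t → 𝔽) →ₗ[𝔽] (Fin k → 𝔽))
    (ψ : E → (Fin t → 𝔽)) (v : V) (γ : Fin t → 𝔽) :
    Module.finrank 𝔽 ↥(⨆ e : E, Lsub G b ψ e) =
      Module.finrank 𝔽 ↥(⨆ e : E, Lsub G b (G.switchAdd ψ v γ) e) := by
  have : (⨆ e : E, Lsub G b (G.switchAdd ψ v γ) e) =
      Submodule.map ((shear b v γ) : _ →ₗ[𝔽] _) (⨆ e : E, Lsub G b ψ e) := by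
    rw [Submodule.map_iSup]
    exact iSup_congr fun e => (map_shear_Lsub G b ψ v γ e).symm
  rw [this, LinearEquiv.finrank_map_eq]

/-- Lemma 7.5: if `ψ'` is an additive gain function equivalent to `ψ` via switchings,
then the spans of the canonical subspaces `L_{e,ψ}` and `L_{e,ψ'}` have the same
dimension. -/
theorem dim_Lsub_equivalent {V E : Type*} (G : GG V E)
    (b : (Fin d → 𝔽) →ₗ[𝔽] (Fin t → 𝔽) →ₗ[𝔽] (Fin k → 𝔽))
    (ψ ψ' : E → (Fin t → 𝔽)) (h : G.EquivalentAdd ψ ψ') :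
    Module.finrank 𝔽 ↥(⨆ e : E, Lsub G b ψ e) =
      Module.finrank 𝔽 ↥(⨆ e : E, Lsub G b ψ' e) := by
  induction h with
  | refl => rfl
  | tail _ step ih =>
    obtain ⟨v, γ, rfl⟩ := step
    exact ih.trans (finrank_switch G b _ v γ)
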